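/- If H is a weak Hopf algebra and g ∈ H is group-like, then g is invertible with inverse g^{-1} = S(g), where S is the antipode. -/

import Mathlib

open TensorProduct

noncomputable section

/-- The data of a (candidate) weak bialgebra over `k`: an associative unital
multiplication `mul` with unit `one`, a comultiplication `comul` and a counit `counit`. -/
structure WBData (k : Type) [CommRing k] (H : Type) [AddCommGroup H] [Module k H] where
  mul : H →ₗ[k] H →ₗ[k] H
  one : H
  comul : H →ₗ[k] H ⊗[k] H
  counit : H →ₗ[k] k

namespace WBData

variable {k : Type} [CommRing k] {H : Type} [AddCommGroup H] [Module k H] (W : WBData k H)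

/-- Multiplication as a map on the tensor product. -/
def mulT : H ⊗[k] H →ₗ[k] H := TensorProduct.lift W.mul

/-- The induced multiplication on `H ⊗ H`: `(a⊗b)·(c⊗d) = (ac)⊗(bd)`. -/
def mul₂ (x y : H ⊗[k] H) : H ⊗[k] H :=
  TensorProduct.map W.mulT W.mulT (TensorProduct.tensorTensorTensorComm k H H H H (x ⊗ₜ[k] y))

/-- The source counital map `ε_s(h) = 1' ε(h 1'')`. -/
def εsMap : H →ₗ[k] H :=
  (TensorProduct.lid k H).toLinearMap
    ∘ₗ LinearMap.rTensor H (W.counit ∘ₗ W.mulT)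
    ∘ₗ (TensorProduct.assoc k H H H).symm.toLinearMap
    ∘ₗ (TensorProduct.mk k H (H ⊗[k] H)).flip ((TensorProduct.comm k H H) (W.comul W.one))

/-- The target counital map `ε_t(h) = ε(1' h) 1''`. -/
def εtMap : H →ₗ[k] H :=
  (TensorProduct.rid k H).toLinearMap
    ∘ₗ LinearMap.lTensor H (W.counit ∘ₗ W.mulT)
    ∘ₗ (TensorProduct.assoc k H H H).toLinearMap
    ∘ₗ (TensorProduct.mk k (H ⊗[k] H) H) ((TensorProduct.comm k H H) (W.comul W.one))

/-- The map `\bar ε_s(h) = 1' ε(1'' h)`. -/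
def barεsMap : H →ₗ[k] H :=
  (TensorProduct.rid k H).toLinearMap
    ∘ₗ LinearMap.lTensor H (W.counit ∘ₗ W.mulT)
    ∘ₗ (TensorProduct.assoc k H H H).toLinearMap
    ∘ₗ (TensorProduct.mk k (H ⊗[k] H) H) (W.comul W.one)

/-- The source base algebra `H_s = ε_s(H)`. -/
def Hs : Submodule k H := LinearMap.range W.εsMap

/-- The target base algebra `H_t = ε_t(H)`. -/
def Ht : Submodule k H := LinearMap.range W.εtMap

/-- The axioms of a weak bialgebra for the data `W`. -/
structure IsWeakBialgebra : Prop where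
  mul_assoc : ∀ x y z : H, W.mul (W.mul x y) z = W.mul x (W.mul y z)
  one_mul : ∀ x : H, W.mul W.one x = x
  mul_one : ∀ x : H, W.mul x W.one = x
  coassoc : ∀ x : H,
    (TensorProduct.assoc k H H H) (LinearMap.rTensor H W.comul (W.comul x)) =
      LinearMap.lTensor H W.comul (W.comul x)
  counit_left : ∀ x : H,
    (TensorProduct.lid k H) (LinearMap.rTensor H W.counit (W.comul x)) = x
  counit_right : ∀ x : H,
    (TensorProduct.rid k H) (LinearMap.lTensor H W.counit (W.comul x)) = x
  comul_mul : ∀ x y : H, W.comul (W.mul x y) = W.mul₂ (W.comul x) (W.comul y)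
  counit_mul : ∀ x y z : H, W.counit (W.mul (W.mul x y) z) =
    (LinearMap.mul' k k)
      (TensorProduct.map (W.counit ∘ₗ W.mul x) (W.counit ∘ₗ W.mul.flip z) (W.comul y))
  counit_mul_op : ∀ x y z : H, W.counit (W.mul (W.mul x y) z) =
    (LinearMap.mul' k k)
      (TensorProduct.map (W.counit ∘ₗ W.mul x) (W.counit ∘ₗ W.mul.flip z)
        ((TensorProduct.comm k H H) (W.comul y)))
  comul_one : LinearMap.rTensor H W.comul (W.comul W.one) =
    (LinearMap.rTensor H (TensorProduct.comm k H H).toLinearMap)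
      ((TensorProduct.assoc k H H H).symm
        ((TensorProduct.map W.mulT LinearMap.id)
          ((TensorProduct.tensorTensorTensorComm k H H H H)
            (((TensorProduct.comm k H H) (W.comul W.one)) ⊗ₜ[k] (W.comul W.one)))))
  comul_one_op : LinearMap.rTensor H W.comul (W.comul W.one) =
    (LinearMap.rTensor H (TensorProduct.comm k H H).toLinearMap)
      ((TensorProduct.assoc k H H H).symm
        ((TensorProduct.map (W.mulT ∘ₗ (TensorProduct.comm k H H).toLinearMap) LinearMap.id)
          ((TensorProduct.tensorTensorTensorComm k H H H H)
            (((TensorProduct.comm k H H) (W.comul W.one)) ⊗ₜ[k] (W.comul W.one)))))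

/-- `g` is right group-like: `Δ g = (g⊗g)·Δ1` and `ε_s(g) = 1`. -/
def IsRightGroupLike (g : H) : Prop :=
  W.comul g = W.mul₂ (g ⊗ₜ[k] g) (W.comul W.one) ∧ W.εsMap g = W.one

/-- `g` is left group-like: `Δ g = Δ1·(g⊗g)` and `ε_t(g) = 1`. -/
def IsLeftGroupLike (g : H) : Prop :=
  W.comul g = W.mul₂ (W.comul W.one) (g ⊗ₜ[k] g) ∧ W.εtMap g = W.one

/-- `g` is group-like if it is both right and left group-like. -/
def IsGroupLike (g : H) : Prop := W.IsRightGroupLike g ∧ W.IsLeftGroupLike g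

/-- The coaction `x ↦ x' ⊗ (g x'')` of `H` on (the ambient space of) `H_s`,
defining the comodule `H_s^g` for a group-like `g`. -/
def βg (g : H) : H →ₗ[k] H ⊗[k] H :=
  LinearMap.lTensor H (W.mul g) ∘ₗ W.comul

/-- A coaction `β : V → V ⊗ H` is a (right) comodule structure if it is coassociative and
counital. -/
def IsCoaction {V : Type} [AddCommGroup V] [Module k V] (β : V →ₗ[k] V ⊗[k] H) : Prop :=
  (∀ v : V, (TensorProduct.assoc k V H H) (LinearMap.rTensor H β (β v)) =
      LinearMap.lTensor V W.comul (β v)) ∧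
  (∀ v : V, (TensorProduct.rid k V) (LinearMap.lTensor V W.counit (β v)) = v)

/-- The truncation idempotent `P_{V,W}(v⊗w) = (v₀⊗w₀) ε(v₁w₁)` of two comodules, expressed
on the ambient tensor product. -/
def truncP {V U : Type} [AddCommGroup V] [Module k V] [AddCommGroup U] [Module k U]
    (βa : V →ₗ[k] V ⊗[k] H) (βb : U →ₗ[k] U ⊗[k] H) : V ⊗[k] U →ₗ[k] V ⊗[k] U :=
  (TensorProduct.rid k (V ⊗[k] U)).toLinearMap
    ∘ₗ LinearMap.lTensor (V ⊗[k] U) (W.counit ∘ₗ W.mulT)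
    ∘ₗ (TensorProduct.tensorTensorTensorComm k V H U H).toLinearMap
    ∘ₗ TensorProduct.map βa βb

/-- The coaction `v⊗w ↦ (v₀⊗w₀)⊗(v₁w₁)` on the (truncated) tensor product of two comodules,
expressed on the ambient tensor product. -/
def βtens {V U : Type} [AddCommGroup V] [Module k V] [AddCommGroup U] [Module k U]
    (βa : V →ₗ[k] V ⊗[k] H) (βb : U →ₗ[k] U ⊗[k] H) : V ⊗[k] U →ₗ[k] (V ⊗[k] U) ⊗[k] H :=
  LinearMap.lTensor (V ⊗[k] U) W.mulT
    ∘ₗ (TensorProduct.tensorTensorTensorComm k V H U H).toLinearMap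
    ∘ₗ TensorProduct.map βa βb

/-- The two-sided ideal (with respect to `W.mul`) generated by a set `s`. -/
def twoSidedIdeal (s : Set H) : Submodule k H :=
  sInf {J : Submodule k H | s ⊆ J ∧ ∀ x : H, ∀ y ∈ J, W.mul x y ∈ J ∧ W.mul y x ∈ J}

/-- Powers of an element with respect to `W.mul`. -/
def powW (g : H) : ℕ → H
  | 0 => W.one
  | n + 1 => W.mul (powW g n) g

/-- An antipode for `W`, making it a weak Hopf algebra. -/
def IsAntipode (S : H →ₗ[k] H) : Prop :=
  (∀ x : H, W.mulT (LinearMap.lTensor H S (W.comul x)) = W.εtMap x) ∧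
  (∀ x : H, W.mulT (LinearMap.rTensor H S (W.comul x)) = W.εsMap x) ∧
  (∀ x : H, W.mulT (LinearMap.lTensor H S
      (LinearMap.rTensor H (W.mulT ∘ₗ LinearMap.rTensor H S)
        (LinearMap.rTensor H W.comul (W.comul x)))) = S x)

end WBData

/-- A homomorphism of weak bialgebras: a linear map which is a homomorphism of unital
algebras and of counital coalgebras. -/
def IsWBHom {k : Type} [CommRing k] {H H' : Type} [AddCommGroup H] [Module k H]
    [AddCommGroup H'] [Module k H'] (W : WBData k H) (W' : WBData k H')
    (f : H →ₗ[k] H') : Prop :=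
  (∀ x y : H, f (W.mul x y) = W'.mul (f x) (f y)) ∧
  f W.one = W'.one ∧
  (∀ x : H, W'.comul (f x) = TensorProduct.map f f (W.comul x)) ∧
  (∀ x : H, W'.counit (f x) = W.counit x)

end


noncomputable section Aux

open TensorProduct

namespace WBData

variable {k : Type} [CommRing k] {H : Type} [AddCommGroup H] [Module k H] (W : WBData k H)

lemma mulT_tmul (x y : H) : W.mulT (x ⊗ₜ[k] y) = W.mul x y := rfl

lemma mul2_tmul (x y z w : H) :
    W.mul₂ (x ⊗ₜ[k] y) (z ⊗ₜ[k] w) = (W.mul x z) ⊗ₜ[k] (W.mul y w) := by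
  simp [WBData.mul₂, mulT_tmul]

lemma mul2_sum_left {ι : Type} (s : Finset ι) (y : H ⊗[k] H) (f : ι → H ⊗[k] H) :
    W.mul₂ (∑ i ∈ s, f i) y = ∑ i ∈ s, W.mul₂ (f i) y := by
  simp [WBData.mul₂, sum_tmul, map_sum]

lemma mul2_sum_right {ι : Type} (s : Finset ι) (x : H ⊗[k] H) (f : ι → H ⊗[k] H) :
    W.mul₂ x (∑ i ∈ s, f i) = ∑ i ∈ s, W.mul₂ x (f i) := by
  simp [WBData.mul₂, tmul_sum, map_sum]

lemma sum_collapse {M : Type} [AddCommGroup M] [Module k M] {F : Finset (H × H)}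
    (hsq : ∑ p ∈ F, ∑ q ∈ F, (W.mul p.1 q.1) ⊗ₜ[k] (W.mul p.2 q.2) = ∑ p ∈ F, p.1 ⊗ₜ[k] p.2)
    (L : H ⊗[k] H →ₗ[k] M) :
    ∑ p ∈ F, ∑ q ∈ F, L ((W.mul p.1 q.1) ⊗ₜ[k] (W.mul p.2 q.2))
      = ∑ p ∈ F, L (p.1 ⊗ₜ[k] p.2) := by
  have h := congrArg L hsq
  simp only [map_sum] at h
  exact h

lemma sum_mul_sum {ι κ : Type} (s : Finset ι) (t : Finset κ) (X : ι → H) (Y : κ → H) :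
    ∑ i ∈ s, ∑ j ∈ t, W.mul (X i) (Y j) = W.mul (∑ i ∈ s, X i) (∑ j ∈ t, Y j) := by
  rw [map_sum, Finset.sum_comm]
  refine Finset.sum_congr rfl fun j _ => ?_
  have h := map_sum (W.mul.flip (Y j)) X s
  simpa using h.symm

end WBData

end Aux

open TensorProduct in
/-- If `H` is a weak Hopf algebra and `g ∈ H` is group-like, then `g` is
invertible with inverse `g⁻¹ = S(g)`, where `S` is the antipode. -/
theorem grouplike_inverse_antipode {k : Type} [Field k] {H : Type} [AddCommGroup H] [Module k H]
    (W : WBData k H) (hW : W.IsWeakBialgebra) (S : H →ₗ[k] H) (hS : W.IsAntipode S)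
    (g : H) (hg : W.IsGroupLike g) :
    W.mul g (S g) = W.one ∧ W.mul (S g) g = W.one := by
  obtain ⟨⟨hΔR, hεs⟩, hΔL, hεt⟩ := hg
  obtain ⟨hS1, hS2, hS3⟩ := hS
  obtain ⟨F, hF⟩ := TensorProduct.exists_finset (W.comul W.one)
  -- the two representations of Δg
  have hR : W.comul g = ∑ p ∈ F, (W.mul g p.1) ⊗ₜ[k] (W.mul g p.2) := by
    rw [hΔR, hF, W.mul2_sum_right]
    exact Finset.sum_congr rfl fun p _ => W.mul2_tmul g g p.1 p.2
  have hL : W.comul g = ∑ p ∈ F, (W.mul p.1 g) ⊗ₜ[k] (W.mul p.2 g) := by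
    rw [hΔL, hF, W.mul2_sum_left]
    exact Finset.sum_congr rfl fun p _ => W.mul2_tmul p.1 p.2 g g
  -- antipode axioms in component form
  have hA1R : ∑ p ∈ F, W.mul (W.mul g p.1) (S (W.mul g p.2)) = W.one := by
    have h := hS1 g
    rw [hR, hεt] at h
    simpa [map_sum, WBData.mulT_tmul] using h
  have hA1L : ∑ p ∈ F, W.mul (W.mul p.1 g) (S (W.mul p.2 g)) = W.one := by
    have h := hS1 g
    rw [hL, hεt] at h
    simpa [map_sum, WBData.mulT_tmul] using h
  have hA2R : ∑ p ∈ F, W.mul (S (W.mul g p.1)) (W.mul g p.2) = W.one := by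
    have h := hS2 g
    rw [hR, hεs] at h
    simpa [map_sum, WBData.mulT_tmul] using h
  have hA2L : ∑ p ∈ F, W.mul (S (W.mul p.1 g)) (W.mul p.2 g) = W.one := by
    have h := hS2 g
    rw [hL, hεs] at h
    simpa [map_sum, WBData.mulT_tmul] using h
  -- Δ1 · Δ1 = Δ1
  have hsq : ∑ p ∈ F, ∑ q ∈ F, (W.mul p.1 q.1) ⊗ₜ[k] (W.mul p.2 q.2)
      = ∑ p ∈ F, p.1 ⊗ₜ[k] p.2 := by
    have h := hW.comul_mul W.one W.one
    rw [hW.mul_one, hF, W.mul2_sum_left] at h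
    simp only [W.mul2_sum_right, W.mul2_tmul] at h
    exact h.symm
  -- weak coassociativity of the unit, in components
  have hC1 : ∑ p ∈ F, (W.comul p.1) ⊗ₜ[k] p.2
      = ∑ q ∈ F, ∑ p ∈ F, (p.1 ⊗ₜ[k] (W.mul p.2 q.1)) ⊗ₜ[k] q.2 := by
    have h := hW.comul_one
    rw [hF] at h
    simpa [map_sum, tmul_sum, sum_tmul, WBData.mulT_tmul] using h
  have hC1' : ∑ p ∈ F, p.1 ⊗ₜ[k] (W.comul p.2)
      = ∑ q ∈ F, ∑ p ∈ F, p.1 ⊗ₜ[k] ((W.mul p.2 q.1) ⊗ₜ[k] q.2) := by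
    have h := hW.coassoc W.one
    rw [hF] at h
    simp only [map_sum, LinearMap.rTensor_tmul, LinearMap.lTensor_tmul] at h
    rw [← h, ← map_sum, hC1]
    simp [map_sum]
  ---------------------------------------------------------------------------
  -- ROUTE 1 : g * S g = 1
  ---------------------------------------------------------------------------
  set Lg : H ⊗[k] H →ₗ[k] H ⊗[k] H :=
    TensorProduct.map W.mulT W.mulT
      ∘ₗ (TensorProduct.tensorTensorTensorComm k H H H H).toLinearMap
      ∘ₗ (TensorProduct.mk k (H ⊗[k] H) (H ⊗[k] H)) (W.comul g) with hLgdef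
  have hLg : ∀ y : H ⊗[k] H, Lg y = W.mul₂ (W.comul g) y := fun y => rfl
  set Lq : H × H → (H ⊗[k] H →ₗ[k] (H ⊗[k] H) ⊗[k] H) := fun q =>
    (TensorProduct.mk k (H ⊗[k] H) H).flip (W.mul g q.2)
      ∘ₗ TensorProduct.map (W.mul g) (W.mul.flip q.1 ∘ₗ W.mul g) with hLqdef
  have hLq : ∀ (q : H × H) (x y : H),
      Lq q (x ⊗ₜ[k] y) = ((W.mul g x) ⊗ₜ[k] (W.mul (W.mul g y) q.1)) ⊗ₜ[k] (W.mul g q.2) := by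
    intro q x y; simp [hLqdef]
  have step1 : LinearMap.rTensor H W.comul (W.comul g)
      = ∑ q ∈ F, ∑ p ∈ F, (Lg (p.1 ⊗ₜ[k] (W.mul p.2 q.1))) ⊗ₜ[k] (W.mul g q.2) := by
    conv_lhs => rw [hR]
    rw [map_sum]
    simp only [LinearMap.rTensor_tmul]
    have e1 : ∀ p : H × H, (W.comul (W.mul g p.1)) ⊗ₜ[k] (W.mul g p.2)
        = (TensorProduct.map Lg (W.mul g)) ((W.comul p.1) ⊗ₜ[k] p.2) := by
      intro p
      rw [TensorProduct.map_tmul, hLg, ← hW.comul_mul]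
    rw [Finset.sum_congr rfl fun p _ => e1 p, ← map_sum, hC1]
    simp [map_sum]
  have step2 : LinearMap.rTensor H W.comul (W.comul g)
      = ∑ q ∈ F, ∑ p ∈ F,
          ((W.mul g p.1) ⊗ₜ[k] (W.mul (W.mul g p.2) q.1)) ⊗ₜ[k] (W.mul g q.2) := by
    rw [step1]
    refine Finset.sum_congr rfl fun q _ => ?_
    have e2 : ∀ p : H × H, (Lg (p.1 ⊗ₜ[k] (W.mul p.2 q.1))) ⊗ₜ[k] (W.mul g q.2)
        = ∑ r ∈ F, Lq q ((W.mul r.1 p.1) ⊗ₜ[k] (W.mul r.2 p.2)) := by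
      intro p
      rw [hLg, hR, W.mul2_sum_left, TensorProduct.sum_tmul]
      refine Finset.sum_congr rfl fun r _ => ?_
      rw [W.mul2_tmul, hLq, hW.mul_assoc g r.1 p.1,
        ← hW.mul_assoc (W.mul g r.2) p.2 q.1, hW.mul_assoc g r.2 p.2]
    rw [Finset.sum_congr rfl fun p _ => e2 p, Finset.sum_comm,
      W.sum_collapse hsq (Lq q)]
    exact Finset.sum_congr rfl fun p _ => hLq q p.1 p.2
  have hQ1 : S g = ∑ q ∈ F, W.mul q.1 (S (W.mul g q.2)) := by
    have h := hS3 g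
    rw [step2] at h
    simp only [map_sum, LinearMap.rTensor_tmul, LinearMap.lTensor_tmul,
      LinearMap.comp_apply, W.mulT_tmul] at h
    rw [← h]
    have e3 : ∀ (q p : H × H),
        W.mul (W.mul (S (W.mul g p.1)) (W.mul (W.mul g p.2) q.1)) (S (W.mul g q.2))
          = W.mul (W.mul (W.mul (S (W.mul g p.1)) (W.mul g p.2)) q.1) (S (W.mul g q.2)) := by
      intro q p
      rw [hW.mul_assoc (S (W.mul g p.1)) (W.mul g p.2) q.1]
    calc ∑ q ∈ F, ∑ p ∈ F,
          W.mul (W.mul (S (W.mul g p.1)) (W.mul (W.mul g p.2) q.1)) (S (W.mul g q.2))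
        = ∑ q ∈ F, ∑ p ∈ F,
          W.mul (W.mul (S (W.mul g p.1)) (W.mul g p.2)) (W.mul q.1 (S (W.mul g q.2))) := by
          refine Finset.sum_congr rfl fun q _ => Finset.sum_congr rfl fun p _ => ?_
          rw [e3 q p, hW.mul_assoc (W.mul (S (W.mul g p.1)) (W.mul g p.2)) q.1 (S (W.mul g q.2))]
      _ = ∑ p ∈ F, ∑ q ∈ F,
          W.mul (W.mul (S (W.mul g p.1)) (W.mul g p.2)) (W.mul q.1 (S (W.mul g q.2))) :=
          Finset.sum_comm
      _ = W.mul (∑ p ∈ F, W.mul (S (W.mul g p.1)) (W.mul g p.2))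
            (∑ q ∈ F, W.mul q.1 (S (W.mul g q.2))) :=
          W.sum_mul_sum F F _ _
      _ = ∑ q ∈ F, W.mul q.1 (S (W.mul g q.2)) := by rw [hA2R, hW.one_mul]
  have goal1 : W.mul g (S g) = W.one := by
    rw [hQ1, map_sum, ← hA1R]
    exact Finset.sum_congr rfl fun q _ => (hW.mul_assoc g q.1 (S (W.mul g q.2))).symm
  ---------------------------------------------------------------------------
  -- ROUTE 2 : S g * g = 1
  ---------------------------------------------------------------------------
  set Rg : H ⊗[k] H →ₗ[k] H ⊗[k] H :=
    TensorProduct.map W.mulT W.mulT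
      ∘ₗ (TensorProduct.tensorTensorTensorComm k H H H H).toLinearMap
      ∘ₗ (TensorProduct.mk k (H ⊗[k] H) (H ⊗[k] H)).flip (W.comul g) with hRgdef
  have hRg : ∀ y : H ⊗[k] H, Rg y = W.mul₂ y (W.comul g) := fun y => rfl
  set Mp : H × H → (H ⊗[k] H →ₗ[k] H ⊗[k] (H ⊗[k] H)) := fun p =>
    (TensorProduct.mk k H (H ⊗[k] H)) (W.mul p.1 g)
      ∘ₗ TensorProduct.map (W.mul.flip g ∘ₗ W.mul p.2) (W.mul.flip g) with hMpdef
  have hMp : ∀ (p : H × H) (x y : H),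
      Mp p (x ⊗ₜ[k] y)
        = (W.mul p.1 g) ⊗ₜ[k] ((W.mul (W.mul p.2 x) g) ⊗ₜ[k] (W.mul y g)) := by
    intro p x y; simp [hMpdef]
  have step1' : LinearMap.lTensor H W.comul (W.comul g)
      = ∑ q ∈ F, ∑ p ∈ F, (W.mul p.1 g) ⊗ₜ[k] (Rg ((W.mul p.2 q.1) ⊗ₜ[k] q.2)) := by
    conv_lhs => rw [hL]
    rw [map_sum]
    simp only [LinearMap.lTensor_tmul]
    have e1 : ∀ p : H × H, (W.mul p.1 g) ⊗ₜ[k] (W.comul (W.mul p.2 g))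
        = (TensorProduct.map (W.mul.flip g) Rg) (p.1 ⊗ₜ[k] (W.comul p.2)) := by
      intro p
      rw [TensorProduct.map_tmul, hRg, ← hW.comul_mul]
      rfl
    rw [Finset.sum_congr rfl fun p _ => e1 p, ← map_sum, hC1']
    simp [map_sum]
  have step2' : LinearMap.lTensor H W.comul (W.comul g)
      = ∑ p ∈ F, ∑ q ∈ F,
          (W.mul p.1 g) ⊗ₜ[k] ((W.mul (W.mul p.2 q.1) g) ⊗ₜ[k] (W.mul q.2 g)) := by
    rw [step1', Finset.sum_comm]
    refine Finset.sum_congr rfl fun p _ => ?_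
    have e2 : ∀ q : H × H, (W.mul p.1 g) ⊗ₜ[k] (Rg ((W.mul p.2 q.1) ⊗ₜ[k] q.2))
        = ∑ r ∈ F, Mp p ((W.mul q.1 r.1) ⊗ₜ[k] (W.mul q.2 r.2)) := by
      intro q
      rw [hRg, hL, W.mul2_sum_right, TensorProduct.tmul_sum]
      refine Finset.sum_congr rfl fun r _ => ?_
      rw [W.mul2_tmul, hMp, ← hW.mul_assoc q.2 r.2 g,
        ← hW.mul_assoc (W.mul p.2 q.1) r.1 g, hW.mul_assoc p.2 q.1 r.1]
    rw [Finset.sum_congr rfl fun q _ => e2 q, W.sum_collapse hsq (Mp p)]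
    exact Finset.sum_congr rfl fun q _ => hMp p q.1 q.2
  have step3' : LinearMap.rTensor H W.comul (W.comul g)
      = ∑ p ∈ F, ∑ q ∈ F,
          ((W.mul p.1 g) ⊗ₜ[k] (W.mul (W.mul p.2 q.1) g)) ⊗ₜ[k] (W.mul q.2 g) := by
    have h := hW.coassoc g
    have h' : LinearMap.rTensor H W.comul (W.comul g)
        = (TensorProduct.assoc k H H H).symm (LinearMap.lTensor H W.comul (W.comul g)) := by
      rw [← h]; simp
    rw [h', step2']
    simp [map_sum, TensorProduct.assoc_symm_tmul]
  have hQ2 : S g = ∑ p ∈ F, W.mul (S (W.mul p.1 g)) p.2 := by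
    have h := hS3 g
    rw [step3'] at h
    simp only [map_sum, LinearMap.rTensor_tmul, LinearMap.lTensor_tmul,
      LinearMap.comp_apply, W.mulT_tmul] at h
    rw [← h]
    calc ∑ p ∈ F, ∑ q ∈ F,
          W.mul (W.mul (S (W.mul p.1 g)) (W.mul (W.mul p.2 q.1) g)) (S (W.mul q.2 g))
        = ∑ p ∈ F, ∑ q ∈ F,
          W.mul (W.mul (S (W.mul p.1 g)) p.2) (W.mul (W.mul q.1 g) (S (W.mul q.2 g))) := by
          refine Finset.sum_congr rfl fun p _ => Finset.sum_congr rfl fun q _ => ?_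
          rw [hW.mul_assoc p.2 q.1 g, ← hW.mul_assoc (S (W.mul p.1 g)) p.2 (W.mul q.1 g),
            hW.mul_assoc (W.mul (S (W.mul p.1 g)) p.2) (W.mul q.1 g) (S (W.mul q.2 g))]
      _ = W.mul (∑ p ∈ F, W.mul (S (W.mul p.1 g)) p.2)
            (∑ q ∈ F, W.mul (W.mul q.1 g) (S (W.mul q.2 g))) :=
          W.sum_mul_sum F F _ _
      _ = ∑ p ∈ F, W.mul (S (W.mul p.1 g)) p.2 := by rw [hA1L, hW.mul_one]
  have goal2 : W.mul (S g) g = W.one := by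
    rw [hQ2, ← hA2L]
    have h := map_sum (W.mul.flip g) (fun p : H × H => W.mul (S (W.mul p.1 g)) p.2) F
    simp only [LinearMap.flip_apply] at h
    rw [h]
    exact Finset.sum_congr rfl fun p _ => hW.mul_assoc (S (W.mul p.1 g)) p.2 g
  exact ⟨goal1, goal2⟩
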